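/- Every language generated by a semi-conditional grammar of degree (1,1) (nonerasing, with the rewritten symbol included in the context check) is generated by some random context grammar (nonerasing, with the rewritten symbol excluded from the context check). That is, SC(1,1) ⊆ RC. -/

import Mathlib

/-- Symbols: nonterminals `N` plus terminals `T`. -/
abbrev Symb (N T : Type) := N ⊕ T

/-- `alph w` is the set of symbols occurring in the string `w`. -/
def alph {α : Type} (w : List α) : Set α := {a | a ∈ w}

/-- A (nonerasing) random context grammar: finitely many productions
`(A → x, Per, For)` with `A ∈ N`, `x ∈ (N ∪ T)⁺`, `Per, For ⊆ N`. -/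
structure RCG (N T : Type) where
  rules : Set (N × List (Symb N T) × Set N × Set N)
  fin : rules.Finite
  ne : ∀ r ∈ rules, r.2.1 ≠ []
  start : N

/-- One derivation step of a random context grammar.  The flag `incl` tells whether
the rewritten symbol is included in the context check (`true`: conditions checked
against `alph (uAv)`; `false`: against `alph (uv)`). -/
def RCG.Step {N T : Type} (G : RCG N T) (incl : Bool)
    (s₁ s₂ : List (Symb N T)) : Prop :=
  ∃ A x Per For u v, (A, x, Per, For) ∈ G.rules ∧
    s₁ = u ++ Sum.inl A :: v ∧ s₂ = u ++ x ++ v ∧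
    (∀ B ∈ Per, Sum.inl B ∈ alph (if incl then s₁ else u ++ v)) ∧
    (∀ B ∈ For, Sum.inl B ∉ alph (if incl then s₁ else u ++ v))

/-- The language of a random context grammar (under the chosen derivation definition). -/
def RCG.Lang {N T : Type} (G : RCG N T) (incl : Bool) : Set (List T) :=
  {w | Relation.ReflTransGen (G.Step incl) [Sum.inl G.start] (w.map Sum.inr)}

/-- The family of random context languages over terminal alphabet `T`
(standard definition: rewritten symbol excluded from the context check). -/
def RC (T : Type) : Set (Set (List T)) :=
  {L | ∃ (N : Type) (G : RCG N T), G.Lang false = L}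

/-- A (nonerasing) semi-conditional grammar of degree (1,1): productions
`(A → x, Per, For)` with `Per, For ⊆ N ∪ T` of cardinality at most one. -/
structure SCG (N T : Type) where
  rules : Set (N × List (Symb N T) × Set (Symb N T) × Set (Symb N T))
  fin : rules.Finite
  ne : ∀ r ∈ rules, r.2.1 ≠ []
  per1 : ∀ r ∈ rules, r.2.2.1.Subsingleton
  for1 : ∀ r ∈ rules, r.2.2.2.Subsingleton
  start : N

/-- One derivation step of a semi-conditional grammar; `incl` as in `RCG.Step`. -/
def SCG.Step {N T : Type} (G : SCG N T) (incl : Bool)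
    (s₁ s₂ : List (Symb N T)) : Prop :=
  ∃ A x Per For u v, (A, x, Per, For) ∈ G.rules ∧
    s₁ = u ++ Sum.inl A :: v ∧ s₂ = u ++ x ++ v ∧
    Per ⊆ alph (if incl then s₁ else u ++ v) ∧
    (∀ a ∈ For, a ∉ alph (if incl then s₁ else u ++ v))

/-- The language of a semi-conditional grammar. -/
def SCG.Lang {N T : Type} (G : SCG N T) (incl : Bool) : Set (List T) :=
  {w | Relation.ReflTransGen (G.Step incl) [Sum.inl G.start] (w.map Sum.inr)}

/-- The family SC(1,1): inclusive derivation definition (context `alph (uAv)`). -/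
def SC11 (T : Type) : Set (Set (List T)) :=
  {L | ∃ (N : Type) (G : SCG N T), G.Lang true = L}

/-- The family SC'(1,1): exclusive derivation definition (context `alph (uv)`). -/
def SC11' (T : Type) : Set (Set (List T)) :=
  {L | ∃ (N : Type) (G : SCG N T), G.Lang false = L}

namespace SCtoRC

variable {N T : Type}

@[simp] lemma mem_alph {α : Type} {x : α} {l : List α} : x ∈ alph l ↔ x ∈ l := Iff.rfl

/-- Terminals occurring on a right-hand side of some rule. -/
def usedT (G : SCG N T) : Set T := {a | ∃ r ∈ G.rules, Sum.inr a ∈ r.2.1}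

def simRule (r : N × List (Symb N T) × Set (Symb N T) × Set (Symb N T)) :
    (Symb N T) × List (Symb (Symb N T) T) × Set (Symb N T) × Set (Symb N T) :=
  (Sum.inl r.1, r.2.1.map Sum.inl, r.2.2.1 \ {Sum.inl r.1}, r.2.2.2)

def convRule (a : T) :
    (Symb N T) × List (Symb (Symb N T) T) × Set (Symb N T) × Set (Symb N T) :=
  (Sum.inr a, [Sum.inr a], ∅, Set.range Sum.inl)

lemma usedT_finite (G : SCG N T) : (usedT G).Finite := by
  have h : usedT G ⊆ ⋃ r ∈ G.rules, {a : T | Sum.inr a ∈ r.2.1} := by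
    rintro a ⟨r, hr, ha⟩; exact Set.mem_biUnion hr ha
  refine (Set.Finite.biUnion G.fin fun r _ => ?_).subset h
  exact (r.2.1.finite_toSet).preimage (Sum.inr_injective.injOn)

/-- The simulating random context grammar. -/
def rc (G : SCG N T) : RCG (Symb N T) T where
  rules := simRule '' {r ∈ G.rules | Sum.inl r.1 ∉ r.2.2.2} ∪ convRule '' usedT G
  fin := ((G.fin.subset (Set.sep_subset _ _)).image _).union ((usedT_finite G).image _)
  ne := by
    rintro r (⟨r₀, hr₀, rfl⟩ | ⟨a, _, rfl⟩)
    · simpa [simRule] using G.ne r₀ hr₀.1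
    · simp [convRule]
  start := Sum.inl G.start

lemma sim_step {G : SCG N T} {s t : List (Symb N T)} (h : G.Step true s t) :
    (rc G).Step false (s.map Sum.inl) (t.map Sum.inl) := by
  obtain ⟨A, x, Per, For, u, v, hr, rfl, rfl, hPer, hFor⟩ := h
  simp only [if_true, ite_true] at hPer hFor
  have hAF : Sum.inl A ∉ For := fun hmem => hFor _ hmem (by simp)
  refine ⟨Sum.inl A, x.map Sum.inl, Per \ {Sum.inl A}, For, u.map Sum.inl, v.map Sum.inl,
    Or.inl ⟨(A, x, Per, For), ⟨hr, hAF⟩, rfl⟩, by simp, by simp, ?_, ?_⟩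
  · rintro B ⟨hB, hBne⟩
    have hB' : B ∈ alph (u ++ Sum.inl A :: v) := hPer hB
    simp only [Set.mem_singleton_iff] at hBne
    simp only [mem_alph, List.mem_append, List.mem_cons] at hB'
    simp only [Bool.false_eq_true, if_false, mem_alph, List.mem_append, List.mem_map]
    rcases hB' with h | h | h
    · exact Or.inl ⟨B, h, rfl⟩
    · exact absurd h hBne
    · exact Or.inr ⟨B, h, rfl⟩
  · intro B hB hmem
    apply hFor B hB
    simp only [Bool.false_eq_true, if_false, mem_alph, List.mem_append, List.mem_map] at hmem
    simp only [mem_alph, List.mem_append, List.mem_cons]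
    rcases hmem with ⟨b, hb, hbe⟩ | ⟨b, hb, hbe⟩
    · cases hbe; exact Or.inl hb
    · cases hbe; exact Or.inr (Or.inr hb)

lemma used_of_reach {G : SCG N T} {s : List (Symb N T)}
    (h : Relation.ReflTransGen (G.Step true) [Sum.inl G.start] s) :
    ∀ a : T, Sum.inr a ∈ s → a ∈ usedT G := by
  induction h with
  | refl => intro a ha; simp at ha
  | tail _ hstep ih =>
    obtain ⟨A, x, Per, For, u, v, hr, rfl, rfl, -, -⟩ := hstep
    intro a ha
    simp only [List.mem_append] at ha
    rcases ha with (h | h) | h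
    · exact ih a (by simp [h])
    · exact ⟨_, hr, h⟩
    · exact ih a (by simp [h])

lemma conv_steps (G : SCG N T) (w : List T) :
    (∀ a ∈ w, a ∈ usedT G) → ∀ done : List T,
      Relation.ReflTransGen ((rc G).Step false)
        (done.map Sum.inr ++ w.map (Sum.inl ∘ Sum.inr)) ((done ++ w).map Sum.inr) := by
  induction w with
  | nil => intro _ done; simpa using Relation.ReflTransGen.refl
  | cons a w ih =>
    intro hw done
    refine Relation.ReflTransGen.head
      (⟨Sum.inr a, [Sum.inr a], ∅, Set.range Sum.inl, done.map Sum.inr,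
        w.map (Sum.inl ∘ Sum.inr),
        Or.inr ⟨a, hw a (by simp), rfl⟩, by simp, rfl, by simp, ?_⟩) ?_
    · rintro B ⟨B₀, rfl⟩ hmem
      simp only [Bool.false_eq_true, if_false, mem_alph, List.mem_append, List.mem_map] at hmem
      rcases hmem with ⟨b, _, hbe⟩ | ⟨b, _, hbe⟩ <;> simp at hbe
    · have := ih (fun b hb => hw b (by simp [hb])) (done ++ [a])
      simpa using this

/-- Partial conversion: `t` is `w` with each letter either a terminal or its copy. -/
def PC (w : List T) (t : List (Symb (Symb N T) T)) : Prop :=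
  List.Forall₂ (fun a y => y = Sum.inr a ∨ y = Sum.inl (Sum.inr a)) w t

def Inv (G : SCG N T) (t : List (Symb (Symb N T) T)) : Prop :=
  (∃ s, Relation.ReflTransGen (G.Step true) [Sum.inl G.start] s ∧ t = s.map Sum.inl) ∨
  (∃ w, Relation.ReflTransGen (G.Step true) [Sum.inl G.start] (w.map Sum.inr) ∧ PC w t)

lemma forall₂_split {α β : Type} {R : α → β → Prop} :
    ∀ {u : List β} {w : List α} {y : β} {v : List β}, List.Forall₂ R w (u ++ y :: v) →
      ∃ wu b wv, w = wu ++ b :: wv ∧ List.Forall₂ R wu u ∧ R b y ∧ List.Forall₂ R wv v := by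
  intro u
  induction u with
  | nil =>
    intro w y v h
    rw [List.nil_append] at h
    rcases List.forall₂_cons_right_iff.mp h with ⟨b, w', hb, hw', rfl⟩
    exact ⟨[], b, w', rfl, List.Forall₂.nil, hb, hw'⟩
  | cons c u ih =>
    intro w y v h
    rw [List.cons_append] at h
    rcases List.forall₂_cons_right_iff.mp h with ⟨b, w', hb, hw', rfl⟩
    obtain ⟨wu, b', wv, rfl, h1, h2, h3⟩ := ih hw'
    exact ⟨b :: wu, b', wv, rfl, List.Forall₂.cons hb h1, h2, h3⟩

lemma all_inr {α β : Type} {s : List (α ⊕ β)} (h : ∀ y ∈ s, ∃ b, y = Sum.inr b) :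
    ∃ w : List β, s = w.map Sum.inr := by
  induction s with
  | nil => exact ⟨[], rfl⟩
  | cons y s ih =>
    obtain ⟨b, rfl⟩ := h y (by simp)
    obtain ⟨w, rfl⟩ := ih (fun y hy => h y (by simp [hy]))
    exact ⟨b :: w, rfl⟩

lemma pc_copies (w : List T) : PC (N := N) w (w.map (fun a => Sum.inl (Sum.inr a))) := by
  induction w with
  | nil => exact List.Forall₂.nil
  | cons a w ih => exact List.Forall₂.cons (Or.inr rfl) ih

lemma pc_inr {w w' : List T} (h : PC (N := N) w' (w.map Sum.inr)) : w' = w := by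
  induction w generalizing w' with
  | nil => cases h; rfl
  | cons a w ih =>
    rcases List.forall₂_cons_right_iff.mp h with ⟨b, w'', hb, hw'', rfl⟩
    rcases hb with hb | hb
    · rw [Sum.inr.injEq] at hb
      rw [hb, ih hw'']
    · simp at hb

lemma inv_step {G : SCG N T} {t₁ t₂ : List (Symb (Symb N T) T)}
    (h1 : Inv G t₁) (h : (rc G).Step false t₁ t₂) : Inv G t₂ := by
  obtain ⟨A', x', Per', For', u, v, hr, ht₁, ht₂, hPer, hFor⟩ := h
  simp only [Bool.false_eq_true, if_false] at hPer hFor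
  rcases hr with ⟨⟨A, x, Per, For⟩, ⟨hrG, hAF⟩, heq⟩ | ⟨a, haU, heq⟩
  · -- simulation rule
    simp only [simRule, Prod.mk.injEq] at heq
    obtain ⟨rfl, rfl, rfl, rfl⟩ := heq
    rcases h1 with ⟨s, hreach, rfl⟩ | ⟨w, hreach, hpc⟩
    · -- t₁ = s.map inl
      rcases List.map_eq_append_iff.mp ht₁ with ⟨u₀, s₂, rfl, hu, hs₂⟩
      rcases List.map_eq_cons_iff.mp hs₂ with ⟨b, v₀, rfl, hb, hv⟩
      rw [Sum.inl.injEq] at hb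
      subst hb
      have scstep : G.Step true (u₀ ++ Sum.inl A :: v₀) (u₀ ++ x ++ v₀) := by
        refine ⟨A, x, Per, For, u₀, v₀, hrG, rfl, rfl, ?_, ?_⟩
        · intro c hc
          simp only [ite_true, mem_alph, List.mem_append, List.mem_cons]
          by_cases hcA : c = Sum.inl A
          · exact Or.inr (Or.inl hcA)
          · have h2 := hPer c ⟨hc, by simpa using hcA⟩
            rw [← hu, ← hv] at h2
            simp only [mem_alph, List.mem_append, List.mem_map] at h2
            rcases h2 with ⟨b, hb, hbe⟩ | ⟨b, hb, hbe⟩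
            · cases hbe; exact Or.inl hb
            · cases hbe; exact Or.inr (Or.inr hb)
        · intro c hc hmem
          simp only [ite_true, mem_alph, List.mem_append, List.mem_cons] at hmem
          have hne : Sum.inl c ∉ alph (u ++ v) := hFor c hc
          rw [← hu, ← hv] at hne
          simp only [mem_alph, List.mem_append, List.mem_map, not_or, not_exists] at hne
          rcases hmem with hm | hm | hm
          · exact (hne.1 c) ⟨hm, rfl⟩
          · exact hAF (hm ▸ hc)
          · exact (hne.2 c) ⟨hm, rfl⟩
      refine Or.inl ⟨u₀ ++ x ++ v₀, hreach.tail scstep, ?_⟩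
      rw [ht₂, ← hu, ← hv]; simp
    · -- impossible: t₁ contains an original nonterminal
      exfalso
      rw [ht₁] at hpc
      obtain ⟨_, _, _, _, _, hb, _⟩ := forall₂_split hpc
      rcases hb with hb | hb <;> simp at hb
  · -- conversion rule
    simp only [convRule, Prod.mk.injEq] at heq
    obtain ⟨rfl, rfl, rfl, rfl⟩ := heq
    have hnoN : ∀ B : N, Sum.inl (Sum.inl B) ∉ u ++ v := by
      intro B hB
      exact hFor (Sum.inl B) ⟨B, rfl⟩ (by simpa using hB)
    have hpc1 : ∃ w, Relation.ReflTransGen (G.Step true) [Sum.inl G.start] (w.map Sum.inr) ∧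
        PC w t₁ := by
      rcases h1 with ⟨s, hreach, rfl⟩ | hb
      · -- s has no nonterminals
        have hs : ∀ y ∈ s, ∃ b, y = Sum.inr b := by
          intro y hy
          cases y with
          | inr b => exact ⟨b, rfl⟩
          | inl B =>
            exfalso
            have : Sum.inl (Sum.inl B) ∈ u ++ Sum.inl (Sum.inr a) :: v := by
              rw [← ht₁]; exact List.mem_map_of_mem hy
            simp only [List.mem_append, List.mem_cons] at this
            rcases this with hm | hm | hm
            · exact hnoN B (List.mem_append.mpr (Or.inl hm))
            · simp at hm
            · exact hnoN B (List.mem_append.mpr (Or.inr hm))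
        obtain ⟨w, rfl⟩ := all_inr hs
        refine ⟨w, hreach, ?_⟩
        rw [List.map_map]
        exact pc_copies w
      · exact hb
    obtain ⟨w, hreach, hpc⟩ := hpc1
    rw [ht₁] at hpc
    obtain ⟨wu, b, wv, rfl, hwu, hb, hwv⟩ := forall₂_split hpc
    have hba : b = a := by
      rcases hb with hb | hb
      · simp at hb
      · rw [Sum.inl.injEq, Sum.inr.injEq] at hb; exact hb.symm
    subst hba
    refine Or.inr ⟨wu ++ b :: wv, hreach, ?_⟩
    rw [ht₂, List.append_assoc, List.singleton_append]
    exact List.rel_append hwu (List.Forall₂.cons (Or.inl rfl) hwv)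

lemma lang_eq (G : SCG N T) : (rc G).Lang false = G.Lang true := by
  ext w
  constructor
  · intro hw
    have key : ∀ t, Relation.ReflTransGen ((rc G).Step false) [Sum.inl (rc G).start] t →
        Inv G t := by
      intro t h
      induction h with
      | refl => exact Or.inl ⟨[Sum.inl G.start], Relation.ReflTransGen.refl, rfl⟩
      | tail _ hstep ih => exact inv_step ih hstep
    have hinv : Inv G (w.map Sum.inr) := key _ hw
    rcases hinv with ⟨s, hreach, hs⟩ | ⟨w', hreach, hpc⟩
    · -- w.map inr = s.map inl forces both empty
      cases w with
      | nil =>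
        cases s with
        | nil => exact hreach
        | cons y s => simp at hs
      | cons a w =>
        cases s with
        | nil => simp at hs
        | cons y s => simp at hs
    · have := pc_inr hpc
      subst this
      exact hreach
  · intro hw
    have h1 : Relation.ReflTransGen ((rc G).Step false)
        ([Sum.inl G.start].map Sum.inl) ((w.map Sum.inr).map Sum.inl) :=
      Relation.ReflTransGen.lift (List.map Sum.inl) (fun _ _ h => sim_step h) _ _ hw
    have h2 := conv_steps G w (fun a ha => used_of_reach hw a (by simp [ha])) []
    simp only [List.map_map, List.map_nil, List.nil_append] at h1 h2
    exact h1.trans h2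

end SCtoRC

/-- SC(1,1) ⊆ RC. -/
theorem sc11_subset_rc (T : Type) : SC11 T ⊆ RC T := by
  rintro L ⟨N, G, rfl⟩
  exact ⟨Symb N T, SCtoRC.rc G, SCtoRC.lang_eq G⟩
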